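/- arXiv:1610.07515 — 4 statements merged into one kernel-verified Lean document; each statement's English description precedes it below -/
import Mathlib

section
/- Let G be a group and let a, b ∈ G satisfy a * b * a⁻¹ = b². Then for every natural number n, the element b^(2^n) can be written as a product of at most 2n + 1 elements of the set {a, b, a⁻¹, b⁻¹}; that is, there exists a list l of elements of G with each entry in {a, b, a⁻¹, b⁻¹}, l.prod = b^(2^n), and l.length ≤ 2n + 1. -/
/-- In any group where `a * b * a⁻¹ = b ^ 2`, the element `b ^ (2 ^ n)` is a product of at
most `2 * n + 1` elements of `{a, b, a⁻¹, b⁻¹}`. -/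
theorem bs_power_short_word {G : Type*} [Group G] (a b : G)
    (h : a * b * a⁻¹ = b ^ 2) (n : ℕ) :
    ∃ l : List G, (∀ x ∈ l, x ∈ ({a, b, a⁻¹, b⁻¹} : Set G)) ∧
      l.prod = b ^ (2 ^ n) ∧ l.length ≤ 2 * n + 1 := by
  have key : ∀ m : ℕ, a ^ m * b * (a ^ m)⁻¹ = b ^ (2 ^ m) := by
    intro m
    induction m with
    | zero => simp
    | succ k ih =>
      have : a ^ (k + 1) * b * (a ^ (k + 1))⁻¹ = a * (a ^ k * b * (a ^ k)⁻¹) * a⁻¹ := by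
        rw [pow_succ']
        group
      rw [this, ih, ← conj_pow, h, ← pow_mul, pow_succ, mul_comm]
  refine ⟨List.replicate n a ++ [b] ++ List.replicate n a⁻¹, ?_, ?_, ?_⟩
  · intro x hx
    simp only [List.mem_append, List.mem_replicate, List.mem_singleton] at hx
    rcases hx with (⟨_, rfl⟩ | rfl) | ⟨_, rfl⟩ <;> simp
  · simp [List.prod_replicate, ← key n, mul_assoc]
  · simp; omega
end

section
/- In the Baumslag–Solitar group BS(1,2) = ⟨a, b | a b a⁻¹ = b²⟩, for every natural number n ≥ 1: the element b^(2^n) is a product of at most 2n + 1 elements of {a, b, a⁻¹, b⁻¹}, while every list of elements of {b, b⁻¹} whose product equals b^(2^n) has length at least 2^n. In particular the distortion function of the subgroup ⟨b⟩ in BS(1,2) satisfies Dist(2n+1) ≥ 2^n, so it is at least exponential. -/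
/-- The single relator `a * b * a⁻¹ * b⁻²` defining the Baumslag–Solitar group `BS(1,2)`,
where `a = FreeGroup.of 0` and `b = FreeGroup.of 1`. -/
def bsRels : Set (FreeGroup (Fin 2)) :=
  {FreeGroup.of 0 * FreeGroup.of 1 * (FreeGroup.of 0)⁻¹ * ((FreeGroup.of 1) ^ 2)⁻¹}

/-- The Baumslag–Solitar group `BS(1,2) = ⟨a, b | a b a⁻¹ = b²⟩` as a presented group. -/
abbrev BS12 : Type := PresentedGroup bsRels

/-- The generator `a` of `BS(1,2)`. -/
def bsa : BS12 := PresentedGroup.of 0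

/-- The generator `b` of `BS(1,2)`. -/
def bsb : BS12 := PresentedGroup.of 1

/-- The image of the generators in the permutation group of `ℚ`:
`a` acts as multiplication by `2`, `b` as translation by `1`. -/
noncomputable def bsF : Fin 2 → Equiv.Perm ℚ :=
  ![Equiv.mulLeft₀ (2:ℚ) (by norm_num), Equiv.addRight (1:ℚ)]

lemma bs_rel_holds : ∀ r ∈ bsRels, FreeGroup.lift bsF r = 1 := by
  rintro r rfl
  simp only [map_mul, map_inv, map_pow, FreeGroup.lift_apply_of, bsF]
  ext x
  simp [Equiv.Perm.mul_apply, Equiv.Perm.inv_def, Equiv.mulLeft₀, sq]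
  ring

/-- The induced homomorphism `BS(1,2) →* Perm ℚ`. -/
noncomputable def bsφ : BS12 →* Equiv.Perm ℚ := PresentedGroup.toGroup bs_rel_holds

lemma bsφ_b : bsφ bsb = Equiv.addRight (1:ℚ) := by
  rw [bsb, bsφ, PresentedGroup.toGroup.of]
  simp [bsF]

lemma addRight_zpow (k : ℤ) : ∀ x : ℚ, ((Equiv.addRight (1:ℚ)) ^ k) x = x + k := by
  induction k using Int.induction_on with
  | zero => simp
  | succ n ih =>
      intro x
      rw [zpow_add_one, Equiv.Perm.mul_apply]
      simp only [Equiv.coe_addRight]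
      rw [ih]; push_cast; ring
  | pred n ih =>
      intro x
      rw [zpow_sub_one, Equiv.Perm.mul_apply]
      have h1 : ((Equiv.addRight (1:ℚ))⁻¹) x = x - 1 := by
        simp [Equiv.Perm.inv_def, sub_eq_add_neg]
      rw [h1, ih]; push_cast; ring

/-- `b` has infinite order: the map `k ↦ b ^ k` is injective. -/
lemma bsb_zpow_inj : Function.Injective fun k : ℤ => bsb ^ k := by
  intro j k h
  have h2 := congrArg bsφ h
  simp only [map_zpow, bsφ_b] at h2
  have h0 := congrArg (fun σ : Equiv.Perm ℚ => σ 0) h2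
  simp only [addRight_zpow, zero_add] at h0
  exact_mod_cast h0

/-- The defining relation in `BS(1,2)`. -/
lemma bs_rel : bsa * bsb * bsa⁻¹ = bsb ^ 2 := by
  have h : (QuotientGroup.mk (FreeGroup.of 0 * FreeGroup.of 1 * (FreeGroup.of 0)⁻¹ *
      ((FreeGroup.of 1) ^ 2)⁻¹ : FreeGroup (Fin 2)) : BS12) = 1 := by
    rw [QuotientGroup.eq_one_iff]
    exact Subgroup.subset_normalClosure (by simp [bsRels])
  have h' : bsa * bsb * bsa⁻¹ * (bsb ^ 2)⁻¹ = 1 := by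
    simp [bsa, bsb, PresentedGroup.of] at h ⊢; exact h
  have := mul_eq_one_iff_eq_inv.mp h'
  simpa using this

lemma bs_conj_pow (n : ℕ) : bsa ^ n * bsb * (bsa ^ n)⁻¹ = bsb ^ (2 ^ n) := by
  induction n with
  | zero => simp
  | succ n ih =>
      have : bsa ^ (n+1) * bsb * (bsa ^ (n+1))⁻¹
          = bsa * (bsa ^ n * bsb * (bsa ^ n)⁻¹) * bsa⁻¹ := by
        rw [pow_succ']
        group
      rw [this, ih]
      have h2 : bsa * bsb ^ (2 ^ n) * bsa⁻¹ = (bsa * bsb * bsa⁻¹) ^ (2 ^ n) := by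
        rw [conj_pow]
      rw [h2, bs_rel, ← pow_mul]
      ring_nf

/-- Any word in `{b, b⁻¹}` is `b ^ k` with `|k| ≤` its length. -/
lemma bs_word_pow : ∀ l : List BS12, (∀ x ∈ l, x ∈ ({bsb, bsb⁻¹} : Set BS12)) →
    ∃ k : ℤ, l.prod = bsb ^ k ∧ k.natAbs ≤ l.length := by
  intro l
  induction l with
  | nil => intro _; exact ⟨0, by simp, by simp⟩
  | cons a l ih =>
      intro hmem
      obtain ⟨k, hk, hkl⟩ := ih fun x hx => hmem x (List.mem_cons_of_mem _ hx)
      have ha := hmem a List.mem_cons_self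
      simp only [Set.mem_insert_iff, Set.mem_singleton_iff] at ha
      rcases ha with rfl | rfl
      · refine ⟨1 + k, ?_, ?_⟩
        · rw [List.prod_cons, hk, zpow_add, zpow_one]
        · simp only [List.length_cons]
          have h1 := Int.natAbs_add_le (1:ℤ) k
          simp only [Int.natAbs_one] at h1
          omega
      · refine ⟨-1 + k, ?_, ?_⟩
        · rw [List.prod_cons, hk, zpow_add, zpow_neg_one]
        · simp only [List.length_cons]
          have h1 := Int.natAbs_add_le (-1:ℤ) k
          simp only [Int.natAbs_neg, Int.natAbs_one] at h1
          omega

/-- In `BS(1,2)`, for every `n ≥ 1`, the element `b ^ (2 ^ n)` is a product of at most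
`2 * n + 1` elements of `{a, b, a⁻¹, b⁻¹}`, while every list of elements of `{b, b⁻¹}`
whose product is `b ^ (2 ^ n)` has length at least `2 ^ n`.  Hence the distortion of
`⟨b⟩` in `BS(1,2)` satisfies `Dist (2n+1) ≥ 2 ^ n`, i.e. it is at least exponential. -/
theorem bs_subgroup_exponential_distortion (n : ℕ) (hn : 1 ≤ n) :
    (∃ l : List BS12, (∀ x ∈ l, x ∈ ({bsa, bsb, bsa⁻¹, bsb⁻¹} : Set BS12)) ∧
      l.prod = bsb ^ (2 ^ n) ∧ l.length ≤ 2 * n + 1) ∧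
    (∀ l : List BS12, (∀ x ∈ l, x ∈ ({bsb, bsb⁻¹} : Set BS12)) →
      l.prod = bsb ^ (2 ^ n) → 2 ^ n ≤ l.length) := by
  constructor
  · refine ⟨List.replicate n bsa ++ bsb :: List.replicate n bsa⁻¹, ?_, ?_, ?_⟩
    · intro x hx
      simp only [List.mem_append, List.mem_cons, List.eq_of_mem_replicate] at hx
      rcases hx with h | h | h
      · rw [List.eq_of_mem_replicate h]; simp
      · rw [h]; simp
      · rw [List.eq_of_mem_replicate h]; simp
    · rw [List.prod_append, List.prod_cons, List.prod_replicate, List.prod_replicate,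
        inv_pow, ← mul_assoc]
      exact bs_conj_pow n
    · simp [List.length_append, List.length_replicate]
      omega
  · intro l hmem hprod
    obtain ⟨k, hk, hkl⟩ := bs_word_pow l hmem
    have : bsb ^ k = bsb ^ ((2 ^ n : ℕ) : ℤ) := by
      rw [← hk, hprod, zpow_natCast]
    have hk2 : k = ((2 ^ n : ℕ) : ℤ) := bsb_zpow_inj this
    calc 2 ^ n = k.natAbs := by rw [hk2]; exact (Int.natAbs_natCast _).symm
      _ ≤ l.length := hkl
end

section
/- In the group of 3×3 upper unitriangular matrices over ℤ with A = !![1,1,0; 0,1,0; 0,0,1], B = !![1,0,0; 0,1,1; 0,0,1], C = !![1,0,1; 0,1,0; 0,0,1], for every natural number n ≥ 1: the element C^(n²) is a product of at most 4n elements of {A, B, A⁻¹, B⁻¹}, while every list of elements of {C, C⁻¹} whose product equals C^(n²) has length at least n². In particular the distortion function of the center ⟨C⟩ in the Heisenberg group satisfies Dist(4n) ≥ n², so it is at least quadratic. -/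
/-- The generator `A = !![1,1,0; 0,1,0; 0,0,1]` of the integer Heisenberg group, as a unit
of the ring of 3×3 integer matrices. -/
def heisA : (Matrix (Fin 3) (Fin 3) ℤ)ˣ where
  val := !![1,1,0; 0,1,0; 0,0,1]
  inv := !![1,-1,0; 0,1,0; 0,0,1]
  val_inv := by simp [Matrix.mul_fin_three, ← Matrix.one_fin_three]
  inv_val := by simp [Matrix.mul_fin_three, ← Matrix.one_fin_three]

/-- The generator `B = !![1,0,0; 0,1,1; 0,0,1]` of the integer Heisenberg group. -/
def heisB : (Matrix (Fin 3) (Fin 3) ℤ)ˣ where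
  val := !![1,0,0; 0,1,1; 0,0,1]
  inv := !![1,0,0; 0,1,-1; 0,0,1]
  val_inv := by simp [Matrix.mul_fin_three, ← Matrix.one_fin_three]
  inv_val := by simp [Matrix.mul_fin_three, ← Matrix.one_fin_three]

/-- The central element `C = !![1,0,1; 0,1,0; 0,0,1]` of the integer Heisenberg group. -/
def heisC : (Matrix (Fin 3) (Fin 3) ℤ)ˣ where
  val := !![1,0,1; 0,1,0; 0,0,1]
  inv := !![1,0,-1; 0,1,0; 0,0,1]
  val_inv := by simp [Matrix.mul_fin_three, ← Matrix.one_fin_three]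
  inv_val := by simp [Matrix.mul_fin_three, ← Matrix.one_fin_three]

lemma heisC_inv_val :
    ((heisC⁻¹ : (Matrix (Fin 3) (Fin 3) ℤ)ˣ) : Matrix (Fin 3) (Fin 3) ℤ)
      = !![1,0,-1; 0,1,0; 0,0,1] := rfl

lemma heisA_inv_val :
    ((heisA⁻¹ : (Matrix (Fin 3) (Fin 3) ℤ)ˣ) : Matrix (Fin 3) (Fin 3) ℤ)
      = !![1,-1,0; 0,1,0; 0,0,1] := rfl

lemma heisB_inv_val :
    ((heisB⁻¹ : (Matrix (Fin 3) (Fin 3) ℤ)ˣ) : Matrix (Fin 3) (Fin 3) ℤ)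
      = !![1,0,0; 0,1,-1; 0,0,1] := rfl

lemma heisC_zpow (k : ℤ) :
    ((heisC ^ k : (Matrix (Fin 3) (Fin 3) ℤ)ˣ) : Matrix (Fin 3) (Fin 3) ℤ)
      = !![1,0,(k:ℤ); 0,1,0; 0,0,1] := by
  induction k using Int.induction_on with
  | zero => simp [Matrix.one_fin_three]
  | succ k ih =>
      rw [zpow_add_one, Units.val_mul, ih]
      show _ * heisC.val = _
      simp [heisC, Matrix.mul_fin_three]; ring_nf
  | pred k ih =>
      rw [zpow_sub_one, Units.val_mul, ih, heisC_inv_val]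
      simp [Matrix.mul_fin_three]; ring_nf

lemma heisC_pow (m : ℕ) :
    ((heisC ^ m : (Matrix (Fin 3) (Fin 3) ℤ)ˣ) : Matrix (Fin 3) (Fin 3) ℤ)
      = !![1,0,(m:ℤ); 0,1,0; 0,0,1] := by
  rw [← zpow_natCast, heisC_zpow]

lemma heisA_pow (n : ℕ) :
    ((heisA ^ n : (Matrix (Fin 3) (Fin 3) ℤ)ˣ) : Matrix (Fin 3) (Fin 3) ℤ)
      = !![1,(n:ℤ),0; 0,1,0; 0,0,1] := by
  induction n with
  | zero => simp [Matrix.one_fin_three]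
  | succ k ih =>
      rw [pow_succ, Units.val_mul, ih]
      show _ * heisA.val = _
      simp [heisA, Matrix.mul_fin_three]; ring_nf

lemma heisB_pow (n : ℕ) :
    ((heisB ^ n : (Matrix (Fin 3) (Fin 3) ℤ)ˣ) : Matrix (Fin 3) (Fin 3) ℤ)
      = !![1,0,0; 0,1,(n:ℤ); 0,0,1] := by
  induction n with
  | zero => simp [Matrix.one_fin_three]
  | succ k ih =>
      rw [pow_succ, Units.val_mul, ih]
      show _ * heisB.val = _
      simp [heisB, Matrix.mul_fin_three]; ring_nf

lemma heisA_inv_pow (n : ℕ) :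
    ((heisA⁻¹ ^ n : (Matrix (Fin 3) (Fin 3) ℤ)ˣ) : Matrix (Fin 3) (Fin 3) ℤ)
      = !![1,-(n:ℤ),0; 0,1,0; 0,0,1] := by
  induction n with
  | zero => simp [Matrix.one_fin_three]
  | succ k ih =>
      rw [pow_succ, Units.val_mul, ih, heisA_inv_val]
      simp [Matrix.mul_fin_three]

lemma heisB_inv_pow (n : ℕ) :
    ((heisB⁻¹ ^ n : (Matrix (Fin 3) (Fin 3) ℤ)ˣ) : Matrix (Fin 3) (Fin 3) ℤ)
      = !![1,0,0; 0,1,-(n:ℤ); 0,0,1] := by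
  induction n with
  | zero => simp [Matrix.one_fin_three]
  | succ k ih =>
      rw [pow_succ, Units.val_mul, ih, heisB_inv_val]
      simp [Matrix.mul_fin_three]

/-- Any product of elements of `{C, C⁻¹}` is `C^k` with `|k| ≤` the length of the list. -/
lemma heisC_list_prod (l : List (Matrix (Fin 3) (Fin 3) ℤ)ˣ)
    (h : ∀ x ∈ l, x ∈ ({heisC, heisC⁻¹} : Set (Matrix (Fin 3) (Fin 3) ℤ)ˣ)) :
    ∃ k : ℤ, l.prod = heisC ^ k ∧ k.natAbs ≤ l.length := by
  induction l with
  | nil => exact ⟨0, by simp, by simp⟩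
  | cons x t ih =>
      obtain ⟨k, hk, hkl⟩ := ih (fun y hy => h y (List.mem_cons_of_mem _ hy))
      rcases h x List.mem_cons_self with hx | hx
      · refine ⟨k + 1, ?_, ?_⟩
        · rw [List.prod_cons, hk, hx, zpow_add_one]; exact ((Commute.refl heisC).zpow_right k).eq
        · simp only [List.length_cons]; omega
      · simp only [Set.mem_singleton_iff] at hx
        refine ⟨k - 1, ?_, ?_⟩
        · rw [List.prod_cons, hk, hx, zpow_sub_one]; exact ((Commute.refl heisC).inv_left.zpow_right k).eq
        · simp only [List.length_cons]; omega

/-- In the integer Heisenberg group, for every `n ≥ 1` the element `C ^ (n²)` is a product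
of at most `4 * n` elements of `{A, B, A⁻¹, B⁻¹}`, while every list of elements of
`{C, C⁻¹}` whose product is `C ^ (n²)` has length at least `n²`.  Hence the distortion of
the center `⟨C⟩` satisfies `Dist (4n) ≥ n²`, i.e. it is at least quadratic. -/
theorem heisenberg_center_quadratic_distortion (n : ℕ) (hn : 1 ≤ n) :
    (∃ l : List (Matrix (Fin 3) (Fin 3) ℤ)ˣ,
      (∀ x ∈ l, x ∈ ({heisA, heisB, heisA⁻¹, heisB⁻¹} : Set (Matrix (Fin 3) (Fin 3) ℤ)ˣ)) ∧
      l.prod = heisC ^ (n ^ 2) ∧ l.length ≤ 4 * n) ∧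
    (∀ l : List (Matrix (Fin 3) (Fin 3) ℤ)ˣ,
      (∀ x ∈ l, x ∈ ({heisC, heisC⁻¹} : Set (Matrix (Fin 3) (Fin 3) ℤ)ˣ)) →
      l.prod = heisC ^ (n ^ 2) → n ^ 2 ≤ l.length) := by
  constructor
  · refine ⟨List.replicate n heisA ++ List.replicate n heisB ++
      List.replicate n heisA⁻¹ ++ List.replicate n heisB⁻¹, ?_, ?_, ?_⟩
    · intro x hx
      simp only [List.mem_append, List.mem_replicate] at hx
      rcases hx with ((⟨_, h⟩ | ⟨_, h⟩) | ⟨_, h⟩) | ⟨_, h⟩ <;> simp [h]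
    · rw [List.prod_append, List.prod_append, List.prod_append,
        List.prod_replicate, List.prod_replicate, List.prod_replicate, List.prod_replicate]
      apply Units.ext
      rw [Units.val_mul, Units.val_mul, Units.val_mul, heisA_pow, heisB_pow,
        heisA_inv_pow, heisB_inv_pow, heisC_pow]
      simp [Matrix.mul_fin_three]; ring_nf
    · simp; omega
  · intro l hl hprod
    obtain ⟨k, hk, hkl⟩ := heisC_list_prod l hl
    have h2 : ((heisC ^ k : (Matrix (Fin 3) (Fin 3) ℤ)ˣ) : Matrix (Fin 3) (Fin 3) ℤ)
        = ((heisC ^ (n ^ 2) : (Matrix (Fin 3) (Fin 3) ℤ)ˣ) : Matrix (Fin 3) (Fin 3) ℤ) := by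
      rw [← hk, hprod]
    rw [heisC_zpow, heisC_pow] at h2
    have h3 : k = ((n ^ 2 : ℕ) : ℤ) := by
      have := congrArg (fun M : Matrix (Fin 3) (Fin 3) ℤ => M 0 2) h2
      simpa using this
    calc n ^ 2 = k.natAbs := by omega
      _ ≤ l.length := hkl
end

section
/- Let G be a group, let a : Fin 14 → G, and let t ∈ G. Suppose that for every j, the element t⁻¹ * (a j) * t is a product of exactly 14 elements of the set {a 0, …, a 13} (a positive word of length 14, no inverses). Then for every natural number n, the element t⁻ⁿ * (a 0) * tⁿ is a product of exactly 14ⁿ elements of {a 0, …, a 13} (a positive word of length 14ⁿ); moreover t⁻ⁿ * (a 0) * tⁿ is a product of 2n + 1 elements of {a 0, …, a 13, t, t⁻¹}. -/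
private lemma conj_list {G : Type*} [Group G] (a : Fin 14 → G) (t : G) (k : ℕ)
    (step : ∀ g ∈ Set.range a, ∃ l : List G, (∀ x ∈ l, x ∈ Set.range a) ∧
      l.length = k ∧ l.prod = t⁻¹ * g * t) :
    ∀ l : List G, (∀ x ∈ l, x ∈ Set.range a) →
      ∃ L : List G, (∀ x ∈ L, x ∈ Set.range a) ∧
        L.length = k * l.length ∧ L.prod = t⁻¹ * l.prod * t := by
  intro l
  induction l with
  | nil =>
    intro _
    exact ⟨[], by simp, by simp, by simp⟩
  | cons x l ih =>
    intro hmem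
    obtain ⟨Lx, hLx, hLxlen, hLxprod⟩ := step x (hmem x List.mem_cons_self)
    obtain ⟨Ll, hLl, hLllen, hLlprod⟩ := ih (fun y hy => hmem y (List.mem_cons_of_mem x hy))
    refine ⟨Lx ++ Ll, ?_, ?_, ?_⟩
    · intro y hy
      rcases List.mem_append.mp hy with hy | hy
      · exact hLx y hy
      · exact hLl y hy
    · simp [hLxlen, hLllen]; ring
    · simp [List.prod_append, hLxprod, hLlprod]
      group

private lemma pos_word {G : Type*} [Group G] (a : Fin 14 → G) (t : G)
    (h : ∀ j : Fin 14, ∃ l : List G, (∀ x ∈ l, x ∈ Set.range a) ∧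
      l.length = 14 ∧ l.prod = t⁻¹ * a j * t) :
    ∀ n : ℕ, ∀ g ∈ Set.range a, ∃ l : List G, (∀ x ∈ l, x ∈ Set.range a) ∧
      l.length = 14 ^ n ∧ l.prod = t⁻¹ ^ n * g * t ^ n := by
  have step : ∀ g ∈ Set.range a, ∃ l : List G, (∀ x ∈ l, x ∈ Set.range a) ∧
      l.length = 14 ∧ l.prod = t⁻¹ * g * t := by
    rintro g ⟨j, rfl⟩; exact h j
  intro n
  induction n with
  | zero =>
    intro g hg
    exact ⟨[g], by simpa using hg, by simp, by simp⟩
  | succ n ih =>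
    intro g hg
    obtain ⟨l, hl, hllen, hlprod⟩ := step g hg
    have step' : ∀ g' ∈ Set.range a, ∃ l' : List G, (∀ x ∈ l', x ∈ Set.range a) ∧
        l'.length = 14 ^ n ∧ l'.prod = (t ^ n)⁻¹ * g' * t ^ n := by
      rintro g' ⟨j', rfl⟩
      obtain ⟨L', hL', hL'len, hL'prod⟩ := ih (a j') ⟨j', rfl⟩
      exact ⟨L', hL', hL'len, by rw [hL'prod, inv_pow]⟩
    obtain ⟨L, hL, hLlen, hLprod⟩ := conj_list a (t ^ n) (14 ^ n) step' l hl
    refine ⟨L, hL, ?_, ?_⟩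
    · rw [hLlen, hllen, pow_succ]
    · rw [hLprod, hlprod]
      simp only [inv_pow]
      group

/-- If `t⁻¹ * a j * t` is a positive word of length 14 in the `a j`'s for each `j`, then
`t⁻ⁿ * a 0 * tⁿ` is a positive word of length `14 ^ n` in the `a j`'s, and it is also a
product of `2 * n + 1` elements of `{a 0, …, a 13, t, t⁻¹}`.  This is the exponential
distortion computation for `F₁ = ⟨a₁, …, a₁₄⟩` inside
`G₁ = ⟨a₁, …, a₁₄, t | t⁻¹ aⱼ t = w₁ⱼ⟩`. -/
theorem free_subgroup_exponential_distortion {G : Type*} [Group G]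
    (a : Fin 14 → G) (t : G)
    (h : ∀ j : Fin 14, ∃ l : List G, (∀ x ∈ l, x ∈ Set.range a) ∧
      l.length = 14 ∧ l.prod = t⁻¹ * a j * t) :
    ∀ n : ℕ,
      (∃ l : List G, (∀ x ∈ l, x ∈ Set.range a) ∧
        l.length = 14 ^ n ∧ l.prod = t⁻¹ ^ n * a 0 * t ^ n) ∧
      (∃ l : List G, (∀ x ∈ l, x ∈ Set.range a ∪ {t, t⁻¹}) ∧
        l.length = 2 * n + 1 ∧ l.prod = t⁻¹ ^ n * a 0 * t ^ n) := by
  intro n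
  constructor
  · exact pos_word a t h n (a 0) ⟨0, rfl⟩
  · refine ⟨List.replicate n t⁻¹ ++ [a 0] ++ List.replicate n t, ?_, ?_, ?_⟩
    · intro x hx
      simp only [List.append_assoc, List.mem_append, List.mem_replicate,
        List.mem_singleton] at hx
      rcases hx with ⟨_, rfl⟩ | rfl | ⟨_, rfl⟩
      · right; right; rfl
      · left; exact ⟨0, rfl⟩
      · right; left; rfl
    · simp; ring
    · simp [List.prod_append, List.prod_replicate, inv_pow, mul_assoc]
end
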